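/- Let A ⊆ ℝ² be a Jordan domain with Lipschitz-regular boundary, let i ∈ {1,2} (with B¹ = A, B² = A*), let r₀ > 0, and let F : ℝ² → ℝ² be measurable and continuous on B^i ∩ (∂A)_{⊕r₀}. Then for H¹-almost every q ∈ ∂A and every s ∈ [−1,1], r⁻¹ G^i_{r,C}(s,q) → (−1)^i · 2√(1−s²) · (F(q)·u_A(q)^⊥) as r ↓ 0. -/

import Mathlib

open MeasureTheory Filter Set Metric

noncomputable section

abbrev V2 : Type := EuclideanSpace ℝ (Fin 2)

/-- The unit vector `(cos θ, sin θ)`. -/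
def uvec (θ : ℝ) : V2 := !₂[Real.cos θ, Real.sin θ]

/-- The unit vector `(-sin θ, cos θ)`, perpendicular to `uvec θ`. -/
def uperp (θ : ℝ) : V2 := !₂[-Real.sin θ, Real.cos θ]

/-- The counterclockwise perpendicular `x^⊥ = (-x₂, x₁)`. -/
def perpv (v : V2) : V2 := !₂[-(v 1), v 0]

/-- The tangent cone of `S` at `p`. -/
def TanCone (S : Set V2) (p : V2) : Set V2 :=
  {v | ∃ ps : ℕ → V2, (∀ n, ps n ∈ S \ {p}) ∧
    Tendsto ps atTop (nhds p) ∧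
    Tendsto (fun n => ‖ps n - p‖⁻¹ • (ps n - p)) atTop (nhds (‖v‖⁻¹ • v))}

/-- The normal cone of `S` at `p`. -/
def NorCone (S : Set V2) (p : V2) : Set V2 :=
  {u | ∀ v ∈ TanCone S p, (inner ℝ u v : ℝ) ≤ 0}

/-- `C` is a Jordan curve. -/
def IsJordanCurve (C : Set V2) : Prop :=
  C.Nonempty ∧ ∃ φ : ℝ → V2, ContinuousOn φ (Icc 0 1) ∧ InjOn φ (Ioo 0 1) ∧
    φ 0 = φ 1 ∧ φ '' Icc 0 1 = C

/-- `A` is a Jordan domain. -/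
def IsJordanDomain (A : Set V2) : Prop :=
  IsCompact A ∧ IsConnected (interior A) ∧ IsJordanCurve (frontier A)

/-- `q` is a regular boundary point of `A`, with outward unit normal `uA q`. -/
def RegularAt (A : Set V2) (uA : V2 → V2) (q : V2) : Prop :=
  ‖uA q‖ = 1 ∧ (∀ v ∈ TanCone (frontier A) q, (inner ℝ (uA q) v : ℝ) = 0) ∧
  NorCone A q = {w | ∃ l : ℝ, 0 ≤ l ∧ w = l • uA q} ∧
  NorCone (closure Aᶜ) q = {w | ∃ l : ℝ, 0 ≤ l ∧ w = -(l • uA q)}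

/-- The Jordan domain `A` has Lipschitz-regular boundary, with outward unit
normal field `uA` (set to `0` at the `H¹`-null set of irregular points). -/
def LipschitzRegular (A : Set V2) (uA : V2 → V2) : Prop :=
  (∃ (K : NNReal) (φ : ℝ → V2), LipschitzOnWith K φ (Icc 0 1) ∧ InjOn φ (Ioo 0 1) ∧
    φ 0 = φ 1 ∧ φ '' Icc 0 1 = frontier A) ∧
  (∀ q ∈ frontier A, RegularAt A uA q ∨ uA q = 0) ∧
  μH[1] {q | q ∈ frontier A ∧ ¬ RegularAt A uA q} = 0

/-- `B¹ = A`, `B² = A* = closure Aᶜ`. -/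
def Bset (A : Set V2) (i : ℕ) : Set V2 := if i = 1 then A else closure Aᶜ

/-- The circle flux `G^i_{r,D}(s,q)`. -/
def GD (A : Set V2) (uA : V2 → V2) (F : V2 → V2) (i : ℕ) (r s : ℝ) (q : V2) : ℝ :=
  r * ∫ θ in (0:ℝ)..(2 * Real.pi),
    (Bset A i).indicator (fun x => (inner ℝ (F x) (uvec θ) : ℝ))
      (q + (r * s) • uA q + r • uvec θ)

/-- The circle circulation `G^i_{r,C}(s,q)`. -/
def GC (A : Set V2) (uA : V2 → V2) (F : V2 → V2) (i : ℕ) (r s : ℝ) (q : V2) : ℝ :=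
  r * ∫ θ in (0:ℝ)..(2 * Real.pi),
    (Bset A i).indicator (fun x => (inner ℝ (F x) (uperp θ) : ℝ))
      (q + (r * s) • uA q + r • uvec θ)

end


noncomputable section CircAux

open Real

lemma inner_v2 (x y : V2) : (inner ℝ x y : ℝ) = x 0 * y 0 + x 1 * y 1 := by
  simp [EuclideanSpace.inner_eq_star_dotProduct]; ring

lemma cont_uvec : Continuous uvec := by
  unfold uvec
  exact (PiLp.continuous_toLp ..).comp (continuous_pi fun i => by fin_cases i <;> simp <;> fun_prop)

lemma cont_uperp : Continuous uperp := by
  unfold uperp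
  exact (PiLp.continuous_toLp ..).comp (continuous_pi fun i => by fin_cases i <;> simp <;> fun_prop)

lemma inner_uvec_uvec (α θ : ℝ) : (inner ℝ (uvec α) (uvec θ) : ℝ) = Real.cos (θ - α) := by
  simp [inner_v2, uvec, Real.cos_sub]; ring

lemma norm_uvec (θ : ℝ) : ‖uvec θ‖ = 1 := by
  simp [EuclideanSpace.norm_eq, uvec, Fin.sum_univ_two]

lemma inner_uperp (v : V2) (θ : ℝ) :
    (inner ℝ v (uperp θ) : ℝ) = v 0 * (-Real.sin θ) + v 1 * Real.cos θ := by
  simp [inner_v2, uperp]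

lemma norm_uperp (θ : ℝ) : ‖uperp θ‖ = 1 := by
  simp [EuclideanSpace.norm_eq, uperp, Fin.sum_univ_two]

lemma exists_angle (u : V2) (hu : ‖u‖ = 1) : ∃ α : ℝ, u = uvec α := by
  set z : ℂ := Complex.mk (u 0) (u 1) with hz
  have hnormsq : Complex.normSq z = 1 := by
    have h2 : ‖u‖ ^ 2 = 1 := by rw [hu]; norm_num
    rw [EuclideanSpace.norm_eq] at h2
    rw [Real.sq_sqrt (by positivity)] at h2
    simpa [hz, Complex.normSq_mk, Fin.sum_univ_two, sq] using h2
  have habs : ‖z‖ = 1 := by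
    rw [Complex.norm_def, hnormsq, Real.sqrt_one]
  have hzne : z ≠ 0 := by
    intro h; rw [h] at habs; simp at habs
  refine ⟨Complex.arg z, ?_⟩
  have hcos : Real.cos (Complex.arg z) = u 0 := by
    rw [Complex.cos_arg hzne, habs]; simp [hz]
  have hsin : Real.sin (Complex.arg z) = u 1 := by
    rw [Complex.sin_arg, habs]; simp [hz]
  ext i
  fin_cases i
  · simp [uvec, hcos]
  · simp [uvec, hsin]

lemma mem_tanCone_of_frequently {S : Set V2} {q w : V2} (hw : w ≠ 0)
    (h : ∃ᶠ r in nhdsWithin (0:ℝ) (Set.Ioi 0), q + r • w ∈ S) : w ∈ TanCone S q := by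
  have hsel : ∀ n : ℕ, ∃ r : ℝ, r ∈ Ioo (0:ℝ) (1/(n+1)) ∧ q + r • w ∈ S := by
    intro n
    have hmem : Ioo (0:ℝ) (1/(n+1)) ∈ nhdsWithin (0:ℝ) (Set.Ioi 0) :=
      Ioo_mem_nhdsGT_of_mem (by constructor <;> positivity)
    rcases (h.and_eventually (eventually_of_mem hmem (fun x hx => hx))).exists with ⟨r, hr1, hr2⟩
    exact ⟨r, hr2, hr1⟩
  choose rn hrn hmemn using hsel
  have hrpos : ∀ n, 0 < rn n := fun n => (hrn n).1
  have hrlim : Tendsto rn atTop (nhds 0) := by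
    apply tendsto_of_tendsto_of_tendsto_of_le_of_le tendsto_const_nhds
      tendsto_one_div_add_atTop_nhds_zero_nat
      (fun n => (hrpos n).le) (fun n => (hrn n).2.le)
  refine ⟨fun n => q + rn n • w, fun n => ⟨hmemn n, ?_⟩, ?_, ?_⟩
  · simp only [Set.mem_singleton_iff, add_eq_left, smul_eq_zero]
    rintro (h|h)
    · exact ne_of_gt (hrpos n) h
    · exact hw h
  · have : Tendsto (fun n => q + rn n • w) atTop (nhds (q + (0:ℝ) • w)) :=
      tendsto_const_nhds.add (hrlim.smul_const w)
    simpa using this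
  · have : ∀ n, ‖q + rn n • w - q‖⁻¹ • (q + rn n • w - q) = ‖w‖⁻¹ • w := by
      intro n
      have h1 : q + rn n • w - q = rn n • w := by abel
      rw [h1, norm_smul, Real.norm_of_nonneg (hrpos n).le, mul_inv, smul_smul]
      rw [mul_comm ((rn n)⁻¹), mul_assoc, inv_mul_cancel₀ (ne_of_gt (hrpos n)), mul_one]
    simp only [this]
    exact tendsto_const_nhds

lemma ev_not_mem_star {A : Set V2} {uA : V2 → V2} {q : V2} (hq : RegularAt A uA q)
    {w : V2} (h : (inner ℝ (uA q) w : ℝ) < 0) :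
    ∀ᶠ r in nhdsWithin (0:ℝ) (Set.Ioi 0), q + r • w ∉ closure Aᶜ := by
  by_contra hc
  rw [Filter.not_eventually] at hc
  simp only [not_not] at hc
  have hw : w ≠ 0 := by rintro rfl; simp at h
  have htan : w ∈ TanCone (closure Aᶜ) q := mem_tanCone_of_frequently hw hc
  have hnor : -(uA q) ∈ NorCone (closure Aᶜ) q := by
    rw [hq.2.2.2]; exact ⟨1, zero_le_one, by simp⟩
  have := hnor w htan
  rw [inner_neg_left] at this
  linarith

lemma ev_not_mem_A {A : Set V2} {uA : V2 → V2} {q : V2} (hq : RegularAt A uA q)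
    {w : V2} (h : (0:ℝ) < (inner ℝ (uA q) w : ℝ)) :
    ∀ᶠ r in nhdsWithin (0:ℝ) (Set.Ioi 0), q + r • w ∉ A := by
  by_contra hc
  rw [Filter.not_eventually] at hc
  simp only [not_not] at hc
  have hw : w ≠ 0 := by rintro rfl; simp at h
  have htan : w ∈ TanCone A q := mem_tanCone_of_frequently hw hc
  have hnor : uA q ∈ NorCone A q := by
    rw [hq.2.2.1]; exact ⟨1, zero_le_one, by simp⟩
  have := hnor w htan
  linarith

lemma countable_cos_eq (c : ℝ) : {x : ℝ | Real.cos x = c}.Countable := by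
  by_cases hex : ∃ x₀ : ℝ, Real.cos x₀ = c
  · rcases hex with ⟨x₀, hx₀⟩
    have hsub : {x : ℝ | Real.cos x = c} ⊆
        Set.range (fun p : ℤ × Bool =>
          if p.2 then 2 * (p.1 : ℝ) * Real.pi + x₀ else 2 * (p.1 : ℝ) * Real.pi - x₀) := by
      intro x hx
      have : Real.cos x₀ = Real.cos x := by rw [hx₀]; exact hx.symm
      rcases Real.cos_eq_cos_iff.mp this with ⟨k, hk | hk⟩
      · exact ⟨(k, true), by simp [hk]⟩
      · exact ⟨(k, false), by simp [hk]⟩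
    exact Set.Countable.mono hsub (Set.countable_range _)
  · push_neg at hex
    have : {x : ℝ | Real.cos x = c} = ∅ := by ext x; simp [hex x]
    simp [this]

lemma null_cos_eq (α c : ℝ) : MeasureTheory.volume {θ : ℝ | Real.cos (θ - α) = c} = 0 := by
  have h : {θ : ℝ | Real.cos (θ - α) = c} ⊆ (fun θ => θ - α) ⁻¹' {x | Real.cos x = c} :=
    fun θ hθ => hθ
  have hc : ((fun θ : ℝ => θ - α) ⁻¹' {x | Real.cos x = c}).Countable := by
    have hinj : Function.Injective (fun θ : ℝ => θ - α) := fun a b hab => by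
      simpa using congrArg (· + α) hab
    exact (countable_cos_eq c).preimage hinj
  exact measure_mono_null h (hc.measure_zero _)

lemma ae_cos_ne (α c : ℝ) : ∀ᵐ θ : ℝ, Real.cos (θ - α) ≠ c := by
  rw [MeasureTheory.ae_iff]
  simp only [not_not]
  exact null_cos_eq α c

lemma cond_iff {s θ : ℝ} (hs1 : -1 ≤ s) (hs2 : s ≤ 1) (hθ1 : 0 ≤ θ) (hθ2 : θ ≤ 2*π) :
    (s + Real.cos θ < 0) ↔ (Real.arccos (-s) < θ ∧ θ < 2*π - Real.arccos (-s)) := by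
  set β := Real.arccos (-s) with hβdef
  have hβ0 : 0 ≤ β := Real.arccos_nonneg _
  have hβπ : β ≤ π := Real.arccos_le_pi _
  have hcosβ : Real.cos β = -s := Real.cos_arccos (by linarith) (by linarith)
  have hπ : (0:ℝ) < π := Real.pi_pos
  have key : s + Real.cos θ < 0 ↔ Real.cos θ < Real.cos β := by
    rw [hcosβ]; constructor <;> intro <;> linarith
  rw [key]
  rcases le_or_gt θ π with hθπ | hθπ
  · have hiff : Real.cos θ < Real.cos β ↔ β < θ :=
      ⟨fun h => by
        by_contra hc
        push_neg at hc
        rcases eq_or_lt_of_le hc with rfl | hlt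
        · simp at h
        · exact absurd (Real.strictAntiOn_cos ⟨hθ1, hθπ⟩ ⟨hβ0, hβπ⟩ hlt) (by linarith),
       fun h => Real.strictAntiOn_cos ⟨hβ0, hβπ⟩ ⟨hθ1, hθπ⟩ h⟩
    rw [hiff]
    constructor
    · intro h; exact ⟨h, by linarith⟩
    · intro h; exact h.1
  · have hcos : Real.cos θ = Real.cos (2*π - θ) := (Real.cos_two_pi_sub θ).symm
    have h1 : 0 ≤ 2*π - θ := by linarith
    have h2 : 2*π - θ ≤ π := by linarith
    have hiff : Real.cos θ < Real.cos β ↔ β < 2*π - θ := by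
      rw [hcos]
      exact ⟨fun h => by
        by_contra hc
        push_neg at hc
        rcases eq_or_lt_of_le hc with heq | hlt
        · rw [heq] at h; simp at h
        · exact absurd (Real.strictAntiOn_cos ⟨h1, h2⟩ ⟨hβ0, hβπ⟩ hlt) (by linarith),
       fun h => Real.strictAntiOn_cos ⟨hβ0, hβπ⟩ ⟨h1, h2⟩ h⟩
    rw [hiff]
    constructor
    · intro h; exact ⟨by linarith, by linarith⟩
    · intro h; linarith [h.2]

lemma integrable_piece (b c α s : ℝ) (x y : ℝ) :
    IntervalIntegrable
      (fun θ => if s + Real.cos θ < 0 then (b * (-Real.sin (θ+α)) + c * Real.cos (θ+α)) else 0)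
      MeasureTheory.volume x y := by
  apply IntervalIntegrable.mono_fun' (g := fun _ => |b| + |c|) intervalIntegrable_const
  · apply Measurable.aestronglyMeasurable
    apply Measurable.ite
    · exact measurableSet_lt (by fun_prop) measurable_const
    · fun_prop
    · exact measurable_const
  · apply Filter.Eventually.of_forall
    intro θ
    by_cases h : s + Real.cos θ < 0 <;>
      simp only [h, if_true, if_false, if_pos, if_neg, not_false_iff]
    · rw [Real.norm_eq_abs]
      calc |b * (-Real.sin (θ+α)) + c * Real.cos (θ+α)|
          ≤ |b * (-Real.sin (θ+α))| + |c * Real.cos (θ+α)| := abs_add_le _ _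
      _ ≤ |b| * 1 + |c| * 1 := by
          rw [abs_mul, abs_mul]
          gcongr
          · rw [abs_neg]; exact Real.abs_sin_le_one _
          · exact Real.abs_cos_le_one _
      _ = |b| + |c| := by ring
    · simp [abs_nonneg]
      positivity

lemma integral_ind_lt (b c α : ℝ) {s : ℝ} (hs1 : -1 ≤ s) (hs2 : s ≤ 1) :
    (∫ θ in (0:ℝ)..(2*π),
      if s + Real.cos (θ - α) < 0 then (b * (-Real.sin θ) + c * Real.cos θ) else 0)
    = -2 * Real.sqrt (1 - s^2) * (b * (-Real.sin α) + c * Real.cos α) := by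
  have hπ : (0:ℝ) < π := Real.pi_pos
  set g : ℝ → ℝ :=
    fun θ => if s + Real.cos (θ - α) < 0 then (b * (-Real.sin θ) + c * Real.cos θ) else 0 with hg
  have hper : Function.Periodic g (2*π) := by
    intro θ
    simp only [hg, show θ + 2*π - α = (θ-α) + 2*π by ring, Real.cos_add_two_pi,
      Real.sin_add_two_pi]
  have step1 : (∫ θ in (0:ℝ)..(2*π), g θ) = ∫ θ in α..(α + 2*π), g θ := by
    have := hper.intervalIntegral_add_eq 0 α
    simpa using this
  have step2 : (∫ θ in α..(α + 2*π), g θ) = ∫ θ in (0:ℝ)..(2*π), g (θ + α) := by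
    rw [intervalIntegral.integral_comp_add_right g α]
    ring_nf
  have step3 : ∀ θ, g (θ + α) =
      if s + Real.cos θ < 0 then (b * (-Real.sin (θ+α)) + c * Real.cos (θ+α)) else 0 := by
    intro θ; simp only [hg, add_sub_cancel_right]
  set G : ℝ → ℝ :=
    fun θ => if s + Real.cos θ < 0 then (b * (-Real.sin (θ+α)) + c * Real.cos (θ+α)) else 0
    with hG
  set β := Real.arccos (-s) with hβdef
  have hβ0 : 0 ≤ β := Real.arccos_nonneg _
  have hβπ : β ≤ π := Real.arccos_le_pi _
  set γ := 2*π - β with hγdef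
  have hβγ : β ≤ γ := by rw [hγdef]; linarith
  have I1 := integrable_piece b c α s 0 β
  have I2 := integrable_piece b c α s β γ
  have I3 := integrable_piece b c α s γ (2*π)
  have hsplit : (∫ θ in (0:ℝ)..(2*π), G θ) =
      (∫ θ in (0:ℝ)..β, G θ) + (∫ θ in β..γ, G θ) + (∫ θ in γ..(2*π), G θ) := by
    rw [intervalIntegral.integral_add_adjacent_intervals I1 I2,
      intervalIntegral.integral_add_adjacent_intervals (I1.trans I2) I3]
  have piece1 : (∫ θ in (0:ℝ)..β, G θ) = 0 := by
    rw [intervalIntegral.integral_congr (g := fun _ => (0:ℝ)) ?_, intervalIntegral.integral_zero]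
    intro θ hθ
    rw [Set.uIcc_of_le hβ0] at hθ
    have hnot : ¬ (s + Real.cos θ < 0) := by
      intro hcond
      have := (cond_iff hs1 hs2 hθ.1 (by linarith [hθ.2])).mp hcond
      rw [← hβdef] at this
      linarith [this.1, hθ.2]
    simp only [hG, hnot, if_false]
  have piece3 : (∫ θ in γ..(2*π), G θ) = 0 := by
    rw [intervalIntegral.integral_congr (g := fun _ => (0:ℝ)) ?_, intervalIntegral.integral_zero]
    intro θ hθ
    rw [Set.uIcc_of_le (by linarith : γ ≤ 2*π)] at hθ
    have hnot : ¬ (s + Real.cos θ < 0) := by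
      intro hcond
      have := (cond_iff hs1 hs2 (by linarith [hθ.1]) hθ.2).mp hcond
      rw [← hβdef, ← hγdef] at this
      linarith [this.2, hθ.1]
    simp only [hG, hnot, if_false]
  have piece2 : (∫ θ in β..γ, G θ) =
      ∫ θ in β..γ, (b * (-Real.sin (θ+α)) + c * Real.cos (θ+α)) := by
    apply intervalIntegral.integral_congr_ae
    have hne : ∀ᵐ θ : ℝ, θ ≠ γ := by
      rw [MeasureTheory.ae_iff]
      simp only [not_not, Set.setOf_eq_eq_singleton]
      exact MeasureTheory.measure_singleton γ
    filter_upwards [hne] with θ hθne hθmem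
    rw [Set.uIoc_of_le hβγ] at hθmem
    have hθγ : θ < γ := lt_of_le_of_ne hθmem.2 hθne
    have hcond : s + Real.cos θ < 0 := by
      apply (cond_iff hs1 hs2 (by linarith [hθmem.1]) (by linarith [hθγ])).mpr
      rw [← hβdef]
      exact ⟨hθmem.1, by rw [hγdef] at hθγ; linarith⟩
    simp only [hG, hcond, if_true]
  have piece2val : (∫ θ in β..γ, (b * (-Real.sin (θ+α)) + c * Real.cos (θ+α))) =
      (b * Real.cos (γ+α) + c * Real.sin (γ+α)) - (b * Real.cos (β+α) + c * Real.sin (β+α)) := by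
    apply intervalIntegral.integral_eq_sub_of_hasDerivAt
      (f := fun θ : ℝ => b * Real.cos (θ+α) + c * Real.sin (θ+α))
    · intro x _
      have h1 : HasDerivAt (fun θ : ℝ => θ + α) 1 x := (hasDerivAt_id x).add_const α
      have hc : HasDerivAt (fun θ : ℝ => Real.cos (θ+α)) (-Real.sin (x+α)) x := by
        simpa using h1.cos
      have hsn : HasDerivAt (fun θ : ℝ => Real.sin (θ+α)) (Real.cos (x+α)) x := by
        simpa using h1.sin
      exact (hc.const_mul b).add (hsn.const_mul c)
    · apply Continuous.intervalIntegrable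
      fun_prop
  have hstep3' : (∫ θ in (0:ℝ)..(2*π), g (θ+α)) = ∫ θ in (0:ℝ)..(2*π), G θ := by
    apply intervalIntegral.integral_congr
    intro θ _
    exact step3 θ
  have e1 : Real.cos (γ+α) = Real.cos (α-β) := by
    rw [show γ+α = (α-β)+2*π by rw [hγdef]; ring, Real.cos_add_two_pi]
  have e2 : Real.sin (γ+α) = Real.sin (α-β) := by
    rw [show γ+α = (α-β)+2*π by rw [hγdef]; ring, Real.sin_add_two_pi]
  have hsinβ : Real.sin β = Real.sqrt (1 - s^2) := by
    rw [hβdef, Real.sin_arccos, neg_sq]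
  rw [step1, step2, hstep3', hsplit, piece1, piece3, piece2, piece2val, e1, e2,
    Real.cos_sub, Real.sin_sub, Real.cos_add, Real.sin_add, hsinβ]
  ring

lemma integral_h_zero (b c : ℝ) :
    (∫ θ in (0:ℝ)..(2*π), (b * (-Real.sin θ) + c * Real.cos θ)) = 0 := by
  rw [intervalIntegral.integral_eq_sub_of_hasDerivAt
    (f := fun θ : ℝ => b * Real.cos θ + c * Real.sin θ)]
  · simp [Real.cos_two_pi, Real.sin_two_pi]
  · intro x _
    exact ((Real.hasDerivAt_cos x).const_mul b).add ((Real.hasDerivAt_sin x).const_mul c)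
  · apply Continuous.intervalIntegrable; fun_prop

lemma integrable_ind3 (b c α s : ℝ) (P : ℝ → ℝ → Prop) [∀ x y, Decidable (P x y)]
    (hP : MeasurableSet {θ : ℝ | P (s + Real.cos (θ - α)) 0}) (x y : ℝ) :
    IntervalIntegrable
      (fun θ => if P (s + Real.cos (θ - α)) 0 then (b * (-Real.sin θ) + c * Real.cos θ) else 0)
      MeasureTheory.volume x y := by
  apply IntervalIntegrable.mono_fun' (g := fun _ => |b| + |c|) intervalIntegrable_const
  · apply Measurable.aestronglyMeasurable
    exact Measurable.ite hP (by fun_prop) measurable_const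
  · apply Filter.Eventually.of_forall
    intro θ
    by_cases h : P (s + Real.cos (θ - α)) 0 <;>
      simp only [h, if_true, if_false]
    · rw [Real.norm_eq_abs]
      calc |b * (-Real.sin θ) + c * Real.cos θ| ≤ |b * (-Real.sin θ)| + |c * Real.cos θ| :=
            abs_add_le _ _
      _ ≤ |b| * 1 + |c| * 1 := by
          rw [abs_mul, abs_mul]
          gcongr
          · rw [abs_neg]; exact Real.abs_sin_le_one _
          · exact Real.abs_cos_le_one _
      _ = |b| + |c| := by ring
    · simp only [norm_zero]
      positivity

lemma integral_ind_gt (b c α : ℝ) {s : ℝ} (hs1 : -1 ≤ s) (hs2 : s ≤ 1) :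
    (∫ θ in (0:ℝ)..(2*π),
      if 0 < s + Real.cos (θ - α) then (b * (-Real.sin θ) + c * Real.cos θ) else 0)
    = 2 * Real.sqrt (1 - s^2) * (b * (-Real.sin α) + c * Real.cos α) := by
  have hpt : ∀ θ : ℝ,
      (if 0 < s + Real.cos (θ - α) then (b * (-Real.sin θ) + c * Real.cos θ) else 0)
      = (b * (-Real.sin θ) + c * Real.cos θ)
        - (if s + Real.cos (θ - α) ≤ 0 then (b * (-Real.sin θ) + c * Real.cos θ) else 0) := by
    intro θ
    rcases lt_or_ge 0 (s + Real.cos (θ - α)) with h | h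
    · rw [if_pos h, if_neg (by linarith)]; ring
    · rw [if_neg (by linarith), if_pos (by linarith)]; ring
  have hle : MeasurableSet {θ : ℝ | s + Real.cos (θ - α) ≤ 0} :=
    measurableSet_le (by fun_prop) measurable_const
  simp only [hpt]
  rw [intervalIntegral.integral_sub (Continuous.intervalIntegrable (by fun_prop) _ _)
    (integrable_ind3 b c α s (fun x y => x ≤ y) hle 0 (2*π)), integral_h_zero]
  have hcongr : (∫ θ in (0:ℝ)..(2*π),
        if s + Real.cos (θ - α) ≤ 0 then (b * (-Real.sin θ) + c * Real.cos θ) else 0)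
      = ∫ θ in (0:ℝ)..(2*π),
        if s + Real.cos (θ - α) < 0 then (b * (-Real.sin θ) + c * Real.cos θ) else 0 := by
    apply intervalIntegral.integral_congr_ae
    filter_upwards [ae_cos_ne α (-s)] with θ hθ _
    rcases lt_trichotomy (s + Real.cos (θ - α)) 0 with h | h | h
    · rw [if_pos h.le, if_pos h]
    · exact absurd (by linarith) hθ
    · rw [if_neg (by linarith), if_neg (by linarith)]
  rw [hcongr, integral_ind_lt b c α hs1 hs2]
  ring

lemma Bset_one (A : Set V2) : Bset A 1 = A := if_pos rfl

lemma Bset_two (A : Set V2) : Bset A 2 = closure Aᶜ := if_neg (by norm_num)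

lemma tendsto_ind_inner {A : Set V2} {r₀ : ℝ} (hr₀ : 0 < r₀) {B : Set V2}
    {F : V2 → V2} (hFcont : ContinuousOn F (B ∩ Metric.cthickening r₀ (frontier A)))
    {q w : V2} (hq : q ∈ B) (hqf : q ∈ frontier A) (hw : ‖w‖ ≤ 2)
    (hev : ∀ᶠ r in nhdsWithin (0:ℝ) (Set.Ioi 0), q + r • w ∈ B) (θ : ℝ) :
    Tendsto (fun r : ℝ => B.indicator (fun x => (inner ℝ (F x) (uperp θ) : ℝ)) (q + r • w))
      (nhdsWithin (0:ℝ) (Set.Ioi 0)) (nhds (inner ℝ (F q) (uperp θ) : ℝ)) := by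
  have hqK : q ∈ B ∩ Metric.cthickening r₀ (frontier A) :=
    ⟨hq, Metric.mem_cthickening_of_dist_le q q r₀ _ hqf (by simp [hr₀.le])⟩
  have htend : Tendsto (fun r : ℝ => q + r • w) (nhdsWithin (0:ℝ) (Set.Ioi 0)) (nhds q) := by
    have : Tendsto (fun r : ℝ => q + r • w) (nhds 0) (nhds (q + (0:ℝ) • w)) :=
      (continuous_const.add (continuous_id.smul continuous_const)).tendsto 0
    simp only [zero_smul, add_zero] at this
    exact this.mono_left nhdsWithin_le_nhds
  have hevK : ∀ᶠ r in nhdsWithin (0:ℝ) (Set.Ioi 0),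
      q + r • w ∈ B ∩ Metric.cthickening r₀ (frontier A) := by
    have hsm : Ioo (0:ℝ) (r₀/2) ∈ nhdsWithin (0:ℝ) (Set.Ioi 0) :=
      Ioo_mem_nhdsGT_of_mem ⟨le_refl 0, by linarith⟩
    filter_upwards [hev, hsm] with r hrB hrI
    refine ⟨hrB, Metric.mem_cthickening_of_dist_le _ q r₀ _ hqf ?_⟩
    have : dist (q + r • w) q = ‖r • w‖ := by
      rw [dist_eq_norm]; congr 1; abel
    rw [this, norm_smul, Real.norm_of_nonneg hrI.1.le]
    calc r * ‖w‖ ≤ r * 2 := by nlinarith [hrI.1.le]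
    _ ≤ r₀ := by nlinarith [hrI.2]
  have htendW : Tendsto (fun r : ℝ => q + r • w) (nhdsWithin (0:ℝ) (Set.Ioi 0))
      (nhdsWithin q (B ∩ Metric.cthickening r₀ (frontier A))) :=
    tendsto_nhdsWithin_of_tendsto_nhds_of_eventually_within _ htend hevK
  have hFt : Tendsto (fun r : ℝ => F (q + r • w)) (nhdsWithin (0:ℝ) (Set.Ioi 0))
      (nhds (F q)) := (hFcont q hqK).tendsto.comp htendW
  have hinner : Tendsto (fun r : ℝ => (inner ℝ (F (q + r • w)) (uperp θ) : ℝ))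
      (nhdsWithin (0:ℝ) (Set.Ioi 0)) (nhds (inner ℝ (F q) (uperp θ) : ℝ)) :=
    hFt.inner tendsto_const_nhds
  apply hinner.congr'
  filter_upwards [hev] with r hr
  exact (Set.indicator_of_mem hr (fun x => (inner ℝ (F x) (uperp θ) : ℝ))).symm

lemma meas_Phi {B : Set V2} (hB : IsClosed B) {F : V2 → V2} (hF : Measurable F)
    (y : V2) (w : ℝ → V2) (hw : Continuous w) (r : ℝ) :
    Measurable (fun θ : ℝ => B.indicator (fun x => (inner ℝ (F x) (uperp θ) : ℝ)) (y + r • w θ)) := by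
  set x : ℝ → V2 := fun θ => y + r • w θ with hx
  have hxc : Continuous x := continuous_const.add (hw.const_smul r)
  have heq : (fun θ : ℝ => B.indicator (fun x' => (inner ℝ (F x') (uperp θ) : ℝ)) (x θ))
      = fun θ : ℝ => (x ⁻¹' B).indicator (fun θ' => (inner ℝ (F (x θ')) (uperp θ') : ℝ)) θ := by
    funext θ
    by_cases h : x θ ∈ B
    · rw [Set.indicator_of_mem h, Set.indicator_of_mem (by exact h)]
    · rw [Set.indicator_of_notMem h, Set.indicator_of_notMem (by exact h)]
  rw [heq]
  apply Measurable.indicator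
  · exact Measurable.inner (hF.comp hxc.measurable) cont_uperp.measurable
  · exact hxc.measurable hB.measurableSet

end CircAux

set_option maxHeartbeats 2000000 in
/-- Pointwise limit of the normalized circle circulation at
`H¹`-a.e. boundary point. -/
theorem circle_circ_limit
    (A : Set V2) (uA : V2 → V2) (hA : IsJordanDomain A) (hreg : LipschitzRegular A uA)
    (i : ℕ) (hi : i = 1 ∨ i = 2) (r₀ : ℝ) (hr₀ : 0 < r₀) (F : V2 → V2)
    (hFmeas : Measurable F)
    (hFcont : ContinuousOn F (Bset A i ∩ Metric.cthickening r₀ (frontier A))) :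
    ∃ N : Set V2, μH[1] N = 0 ∧ ∀ q ∈ frontier A, q ∉ N → ∀ s ∈ Set.Icc (-1:ℝ) 1,
      Tendsto (fun r : ℝ => r⁻¹ * GC A uA F i r s q) (nhdsWithin 0 (Set.Ioi 0))
        (nhds ((-1:ℝ)^i * (2 * Real.sqrt (1 - s^2)) * (inner ℝ (F q) (perpv (uA q)) : ℝ))) := by
  classical
  refine ⟨{q | q ∈ frontier A ∧ ¬ RegularAt A uA q}, hreg.2.2, ?_⟩
  intro q hqf hqN s hs
  have hqreg : RegularAt A uA q := by
    by_contra h; exact hqN ⟨hqf, h⟩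
  have hu : ‖uA q‖ = 1 := hqreg.1
  obtain ⟨α, hα⟩ := exists_angle (uA q) hu
  have hAclosed : IsClosed A := hA.1.isClosed
  have hBclosed : IsClosed (Bset A i) := by
    rcases hi with rfl | rfl
    · rw [Bset_one]; exact hAclosed
    · rw [Bset_two]; exact isClosed_closure
  have hqA : q ∈ A := by
    have := frontier_subset_closure (s := A) hqf
    rwa [hAclosed.closure_eq] at this
  have hqStar : q ∈ closure Aᶜ := by
    rw [closure_compl]
    have hqf' := hqf
    rw [hAclosed.frontier_eq] at hqf'
    exact hqf'.2
  have hqB : q ∈ Bset A i := by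
    rcases hi with rfl | rfl
    · rwa [Bset_one]
    · rwa [Bset_two]
  have hfrc : IsCompact (frontier A) := by
    apply hA.1.of_isClosed_subset isClosed_frontier
    intro x hx
    rw [hAclosed.frontier_eq] at hx
    exact hx.1
  have hKcomp : IsCompact (Bset A i ∩ Metric.cthickening r₀ (frontier A)) :=
    (hfrc.cthickening).inter_left hBclosed
  obtain ⟨M, hM⟩ := hKcomp.exists_bound_of_continuousOn hFcont
  have hqK : q ∈ Bset A i ∩ Metric.cthickening r₀ (frontier A) :=
    ⟨hqB, Metric.mem_cthickening_of_dist_le q q r₀ _ hqf (by simp [hr₀.le])⟩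
  have hM0 : 0 ≤ M := le_trans (norm_nonneg _) (hM q hqK)
  set w : ℝ → V2 := fun θ => s • uA q + uvec θ with hwdef
  have hwnorm : ∀ θ, ‖w θ‖ ≤ 2 := by
    intro θ
    calc ‖s • uA q + uvec θ‖ ≤ ‖s • uA q‖ + ‖uvec θ‖ := norm_add_le _ _
    _ = |s| * 1 + 1 := by rw [norm_smul, hu, norm_uvec, Real.norm_eq_abs]
    _ ≤ 1 * 1 + 1 := by
        have : |s| ≤ 1 := abs_le.mpr ⟨hs.1, hs.2⟩
        gcongr
    _ = 2 := by norm_num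
  have hwc : Continuous w := continuous_const.add cont_uvec
  have hptw : ∀ (r θ : ℝ), q + (r * s) • uA q + r • uvec θ = q + r • w θ := by
    intro r θ
    rw [hwdef]
    simp only [smul_add, smul_smul, add_assoc]
  have hinnerw : ∀ θ, (inner ℝ (uA q) (w θ) : ℝ) = s + Real.cos (θ - α) := by
    intro θ
    rw [hwdef]
    simp only [inner_add_right, real_inner_smul_right]
    rw [real_inner_self_eq_norm_sq, hu, hα, inner_uvec_uvec]
    ring
  set Φ : ℝ → ℝ → ℝ := fun r θ =>
    (Bset A i).indicator (fun x => (inner ℝ (F x) (uperp θ) : ℝ)) (q + r • w θ) with hΦ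
  have hGC : ∀ r : ℝ, GC A uA F i r s q = r * ∫ θ in (0:ℝ)..(2*Real.pi), Φ r θ := by
    intro r
    rw [GC, hΦ]
    congr 1
    apply intervalIntegral.integral_congr
    intro θ _
    simp only
    rw [hptw r θ]
  have hEeq : (fun r : ℝ => r⁻¹ * GC A uA F i r s q)
      =ᶠ[nhdsWithin (0:ℝ) (Set.Ioi 0)] fun r => ∫ θ in (0:ℝ)..(2*Real.pi), Φ r θ := by
    filter_upwards [self_mem_nhdsWithin] with r hr
    rw [hGC r, inv_mul_cancel_left₀ (ne_of_gt hr)]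
  have hmeas : ∀ᶠ r in nhdsWithin (0:ℝ) (Set.Ioi 0),
      MeasureTheory.AEStronglyMeasurable (Φ r)
        (MeasureTheory.volume.restrict (Set.uIoc (0:ℝ) (2*Real.pi))) := by
    apply Filter.Eventually.of_forall
    intro r
    exact ((meas_Phi hBclosed hFmeas q w hwc r).aestronglyMeasurable).restrict
  have hbound : ∀ᶠ r in nhdsWithin (0:ℝ) (Set.Ioi 0),
      ∀ᵐ θ : ℝ ∂MeasureTheory.volume, θ ∈ Set.uIoc (0:ℝ) (2*Real.pi) → ‖Φ r θ‖ ≤ M := by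
    have hsm : Ioo (0:ℝ) (r₀/2) ∈ nhdsWithin (0:ℝ) (Set.Ioi 0) :=
      Ioo_mem_nhdsGT_of_mem ⟨le_refl 0, by linarith⟩
    filter_upwards [hsm] with r hr
    apply MeasureTheory.ae_of_all
    intro θ _
    simp only [hΦ]
    by_cases hmem : q + r • w θ ∈ Bset A i
    · rw [Set.indicator_of_mem hmem]
      have hcth : q + r • w θ ∈ Metric.cthickening r₀ (frontier A) := by
        apply Metric.mem_cthickening_of_dist_le _ q r₀ _ hqf
        have hd : dist (q + r • w θ) q = ‖r • w θ‖ := by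
          rw [dist_eq_norm]; congr 1; abel
        rw [hd, norm_smul, Real.norm_of_nonneg hr.1.le]
        calc r * ‖w θ‖ ≤ r * 2 := by nlinarith [hr.1.le, hwnorm θ]
        _ ≤ r₀ := by nlinarith [hr.2]
      calc ‖(inner ℝ (F (q + r • w θ)) (uperp θ) : ℝ)‖
          ≤ ‖F (q + r • w θ)‖ * ‖uperp θ‖ := norm_inner_le_norm _ _
      _ = ‖F (q + r • w θ)‖ := by rw [norm_uperp, mul_one]
      _ ≤ M := hM _ ⟨hmem, hcth⟩
    · rw [Set.indicator_of_notMem hmem, norm_zero]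
      exact hM0
  rcases hi with rfl | rfl
  · -- i = 1
    set flim : ℝ → ℝ := fun θ =>
      if s + Real.cos (θ - α) < 0 then (F q 0 * (-Real.sin θ) + F q 1 * Real.cos θ) else 0
      with hflim
    have hlim : ∀ᵐ θ : ℝ ∂MeasureTheory.volume, θ ∈ Set.uIoc (0:ℝ) (2*Real.pi) →
        Tendsto (fun r => Φ r θ) (nhdsWithin (0:ℝ) (Set.Ioi 0)) (nhds (flim θ)) := by
      filter_upwards [ae_cos_ne α (-s)] with θ hθ _
      have htne : s + Real.cos (θ - α) ≠ 0 := fun h => hθ (by linarith)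
      rcases lt_or_gt_of_ne htne with hlt | hgt
      · have hev : ∀ᶠ r in nhdsWithin (0:ℝ) (Set.Ioi 0), q + r • w θ ∈ Bset A 1 := by
          filter_upwards [ev_not_mem_star hqreg (by rw [hinnerw θ]; exact hlt)] with r hr
          rw [Bset_one]
          by_contra hc
          exact hr (subset_closure hc)
        have := tendsto_ind_inner hr₀ (Bset_one A ▸ hFcont) (Bset_one A ▸ hqB) hqf
          (hwnorm θ) (by rw [Bset_one] at hev; exact hev) θ
        have hval : flim θ = (inner ℝ (F q) (uperp θ) : ℝ) := by
          rw [hflim]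
          simp only [if_pos hlt]
          rw [inner_uperp]
        rw [hval]
        convert this using 2
        simp only [hΦ, Bset_one]
      · have hev : ∀ᶠ r in nhdsWithin (0:ℝ) (Set.Ioi 0), q + r • w θ ∉ Bset A 1 := by
          filter_upwards [ev_not_mem_A hqreg (by rw [hinnerw θ]; exact hgt)] with r hr
          rwa [Bset_one]
        have hval : flim θ = 0 := by
          rw [hflim]; simp only [if_neg (by linarith : ¬ (s + Real.cos (θ - α) < 0))]
        rw [hval]
        apply Tendsto.congr' _ tendsto_const_nhds
        filter_upwards [hev] with r hr
        exact (Set.indicator_of_notMem hr _).symm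
    have hDCT := intervalIntegral.tendsto_integral_filter_of_dominated_convergence
      (μ := MeasureTheory.volume) (a := (0:ℝ)) (b := 2*Real.pi)
      (f := flim) (F := Φ) (fun _ => M) hmeas hbound intervalIntegrable_const hlim
    have hvalue : (∫ θ in (0:ℝ)..(2*Real.pi), flim θ)
        = (-1:ℝ)^1 * (2 * Real.sqrt (1 - s^2)) * (inner ℝ (F q) (perpv (uA q)) : ℝ) := by
      rw [hflim]
      rw [integral_ind_lt (F q 0) (F q 1) α hs.1 hs.2]
      have hperp : (inner ℝ (F q) (perpv (uA q)) : ℝ)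
          = F q 0 * (-Real.sin α) + F q 1 * Real.cos α := by
        rw [inner_v2, perpv, hα]
        simp [uvec]
        try ring
      rw [hperp]
      ring
    rw [← hvalue]
    exact hDCT.congr' hEeq.symm
  · -- i = 2
    set flim : ℝ → ℝ := fun θ =>
      if 0 < s + Real.cos (θ - α) then (F q 0 * (-Real.sin θ) + F q 1 * Real.cos θ) else 0
      with hflim
    have hlim : ∀ᵐ θ : ℝ ∂MeasureTheory.volume, θ ∈ Set.uIoc (0:ℝ) (2*Real.pi) →
        Tendsto (fun r => Φ r θ) (nhdsWithin (0:ℝ) (Set.Ioi 0)) (nhds (flim θ)) := by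
      filter_upwards [ae_cos_ne α (-s)] with θ hθ _
      have htne : s + Real.cos (θ - α) ≠ 0 := fun h => hθ (by linarith)
      rcases lt_or_gt_of_ne htne with hlt | hgt
      · have hev : ∀ᶠ r in nhdsWithin (0:ℝ) (Set.Ioi 0), q + r • w θ ∉ Bset A 2 := by
          filter_upwards [ev_not_mem_star hqreg (by rw [hinnerw θ]; exact hlt)] with r hr
          rwa [Bset_two]
        have hval : flim θ = 0 := by
          rw [hflim]; simp only [if_neg (by linarith : ¬ (0 < s + Real.cos (θ - α)))]
        rw [hval]
        apply Tendsto.congr' _ tendsto_const_nhds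
        filter_upwards [hev] with r hr
        exact (Set.indicator_of_notMem hr _).symm
      · have hev : ∀ᶠ r in nhdsWithin (0:ℝ) (Set.Ioi 0), q + r • w θ ∈ Bset A 2 := by
          filter_upwards [ev_not_mem_A hqreg (by rw [hinnerw θ]; exact hgt)] with r hr
          rw [Bset_two]
          exact subset_closure hr
        have := tendsto_ind_inner hr₀ (Bset_two A ▸ hFcont) (Bset_two A ▸ hqB) hqf
          (hwnorm θ) (by rw [Bset_two] at hev; exact hev) θ
        have hval : flim θ = (inner ℝ (F q) (uperp θ) : ℝ) := by
          rw [hflim]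
          simp only [if_pos hgt]
          rw [inner_uperp]
        rw [hval]
        convert this using 2
        simp only [hΦ, Bset_two]
    have hDCT := intervalIntegral.tendsto_integral_filter_of_dominated_convergence
      (μ := MeasureTheory.volume) (a := (0:ℝ)) (b := 2*Real.pi)
      (f := flim) (F := Φ) (fun _ => M) hmeas hbound intervalIntegrable_const hlim
    have hvalue : (∫ θ in (0:ℝ)..(2*Real.pi), flim θ)
        = (-1:ℝ)^2 * (2 * Real.sqrt (1 - s^2)) * (inner ℝ (F q) (perpv (uA q)) : ℝ) := by
      rw [hflim]
      rw [integral_ind_gt (F q 0) (F q 1) α hs.1 hs.2]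
      have hperp : (inner ℝ (F q) (perpv (uA q)) : ℝ)
          = F q 0 * (-Real.sin α) + F q 1 * Real.cos α := by
        rw [inner_v2, perpv, hα]
        simp [uvec]
        try ring
      rw [hperp]
      ring
    rw [← hvalue]
    exact hDCT.congr' hEeq.symm
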